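/- Suppose f: R^n → R is continuously differentiable, the level set D = {x : f(x) ≤ f(x_1)} is bounded, f is twice differentiable with ‖∇²f(x)‖ ≤ M on the relevant region, and the iterates x_{k+1} = x_k − α_k g_k (g_k = ∇f(x_k)) satisfy the Armijo–Goldstein conditions f(x_k − α_k g_k) ≤ f(x_k) − α_k ρ g_kᵀg_k and f(x_k − α_k g_k) ≥ f(x_k) − α_k(1−ρ) g_kᵀg_k with 0 < ρ < 1/2. Then lim inf_{k→∞} ‖g_k‖ = 0 (indeed ‖g_k‖ → 0). -/

import Mathlib

noncomputable section
open RealInnerProductSpace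

/-- Convergence of the gradient method with Armijo–Goldstein step size rule: if the level
set of the starting point is bounded, the Hessian is uniformly bounded by `M`, and each
step `x_{k+1} = x_k - α_k g_k` satisfies both Armijo–Goldstein conditions with
`0 < ρ < 1/2`, then `‖g_k‖ → 0` (so in particular `liminf ‖g_k‖ = 0`). -/
theorem gradient_method_armijo_goldstein_convergence (n : ℕ)
    (f : EuclideanSpace ℝ (Fin n) → ℝ) (M ρ : ℝ)
    (hρ : 0 < ρ) (hρ' : ρ < 1/2) (hM : 0 < M)
    (hf : ContDiff ℝ 2 f)
    (x : ℕ → EuclideanSpace ℝ (Fin n)) (α : ℕ → ℝ) (hα : ∀ k, 0 < α k)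
    (hbd : Bornology.IsBounded {y | f y ≤ f (x 0)})
    (hhess : ∀ y, ‖fderiv ℝ (fun z => fderiv ℝ f z) y‖ ≤ M)
    (hiter : ∀ k, x (k+1) = x k - α k • gradient f (x k))
    (harmijo : ∀ k, f (x k - α k • gradient f (x k))
      ≤ f (x k) - α k * ρ * ⟪gradient f (x k), gradient f (x k)⟫)
    (hgoldstein : ∀ k, f (x k) - α k * (1 - ρ) * ⟪gradient f (x k), gradient f (x k)⟫
      ≤ f (x k - α k • gradient f (x k))) :
    Filter.Tendsto (fun k => ‖gradient f (x k)‖) Filter.atTop (nhds 0) := by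
  have hfd : Differentiable ℝ f := hf.differentiable (by norm_num)
  have hfd' : Differentiable ℝ (fderiv ℝ f) :=
    (hf.fderiv_right (m := 1) (by norm_num)).differentiable (by norm_num)
  set g := fun k => gradient f (x k) with hg
  set a := fun k => f (x k) with ha
  -- gradient vs fderiv
  have hinner : ∀ y v, fderiv ℝ f y v = ⟪gradient f y, v⟫ := by
    intro y v
    rw [gradient, InnerProductSpace.toDual_symm_apply]
  -- Lipschitz bound on the derivative
  have lip : ∀ z w : EuclideanSpace ℝ (Fin n),
      ‖fderiv ℝ f z - fderiv ℝ f w‖ ≤ M * ‖z - w‖ := fun z w =>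
    convex_univ.norm_image_sub_le_of_norm_fderiv_le
      (fun y _ => (hfd' y)) (fun y _ => hhess y) (Set.mem_univ w) (Set.mem_univ z)
  -- descent-type inequality
  have descent : ∀ x₀ y : EuclideanSpace ℝ (Fin n),
      f y ≤ f x₀ + fderiv ℝ f x₀ (y - x₀) + M * ‖y - x₀‖ ^ 2 := by
    intro x₀ y
    set L := fderiv ℝ f x₀ with hL
    set h := fun z => f z - L z with hh
    have hdiff : ∀ z, DifferentiableAt ℝ h z := fun z =>
      (hfd z).sub (L.differentiable z)
    have hfder : ∀ z, fderiv ℝ h z = fderiv ℝ f z - L := by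
      intro z
      rw [hh]
      rw [fderiv_fun_sub (hfd z) (L.differentiable z), L.fderiv]
    have hb : ∀ z ∈ Metric.closedBall x₀ ‖y - x₀‖, ‖fderiv ℝ h z‖ ≤ M * ‖y - x₀‖ := by
      intro z hz
      rw [hfder]
      refine (lip z x₀).trans ?_
      have hz' : ‖z - x₀‖ ≤ ‖y - x₀‖ := by
        simpa [Metric.mem_closedBall, dist_eq_norm] using hz
      exact mul_le_mul_of_nonneg_left hz' hM.le
    have key := (convex_closedBall x₀ ‖y - x₀‖).norm_image_sub_le_of_norm_fderiv_le
      (fun z _ => hdiff z) hb (Metric.mem_closedBall_self (norm_nonneg _))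
      (show y ∈ Metric.closedBall x₀ ‖y - x₀‖ by
        simp [Metric.mem_closedBall, dist_eq_norm])
    have h2 : h y - h x₀ = f y - f x₀ - L (y - x₀) := by
      simp only [hh, map_sub]; ring
    have := (abs_le.mp (by rwa [Real.norm_eq_abs] at key)).2
    rw [h2] at this
    nlinarith [this]
  -- step length lower bound when gradient is nonzero
  have hG : ∀ k, (⟪g k, g k⟫ : ℝ) = ‖g k‖ ^ 2 := fun k => real_inner_self_eq_norm_sq _
  have hαlb : ∀ k, g k ≠ 0 → ρ ≤ M * α k := by
    intro k hk
    have hd := descent (x k) (x k - α k • g k)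
    have hsub : x k - α k • g k - x k = -(α k • g k) := by abel
    rw [hsub] at hd
    have hfder_app : fderiv ℝ f (x k) (-(α k • g k)) = -(α k * ⟪g k, g k⟫) := by
      rw [hinner]
      rw [inner_neg_right, inner_smul_right]
    rw [hfder_app] at hd
    have hnorm : ‖-(α k • g k)‖ = α k * ‖g k‖ := by
      rw [norm_neg, norm_smul, Real.norm_eq_abs, abs_of_pos (hα k)]
    rw [hnorm] at hd
    have hgl := hgoldstein k
    have hgk : (0:ℝ) < ‖g k‖ := norm_pos_iff.mpr hk
    have hGpos : (0:ℝ) < ‖g k‖ ^ 2 := by positivity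
    rw [hG k] at hd hgl
    have hαk := hα k
    nlinarith [hd, hgl, mul_pos hαk hGpos]
  -- key decrease inequality
  have hdec : ∀ k, ρ ^ 2 / M * ‖g k‖ ^ 2 ≤ a k - a (k + 1) := by
    intro k
    have harm := harmijo k
    rw [hG k] at harm
    have hstep : a (k + 1) = f (x k - α k • g k) := by
      show f (x (k + 1)) = f (x k - α k • g k)
      rw [hiter k]
    rcases eq_or_ne (g k) 0 with h0 | h0
    · have : a (k+1) ≤ a k := by
        rw [hstep, h0]; simp only [smul_zero, sub_zero]; exact le_rfl
      simp [h0]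
      linarith
    · have hαb := hαlb k h0
      rw [hstep]
      have hGnn : (0:ℝ) ≤ ‖g k‖ ^ 2 := by positivity
      have h1 : ρ ^ 2 / M ≤ ρ * α k := by
        rw [div_le_iff₀ hM] at *
        nlinarith
      nlinarith [mul_le_mul_of_nonneg_right h1 hGnn]
  -- a is antitone
  have hanti : Antitone a := antitone_nat_of_succ_le (by
    intro k
    have := hdec k
    nlinarith [sq_nonneg ‖g k‖, div_pos (pow_pos hρ 2) hM, this])
  -- f bounded below on the level set
  have hD_closed : IsClosed {y | f y ≤ f (x 0)} := isClosed_le hf.continuous continuous_const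
  have hD_compact : IsCompact {y | f y ≤ f (x 0)} :=
    Metric.isCompact_of_isClosed_isBounded hD_closed hbd
  obtain ⟨z, hz, hzmin⟩ := hD_compact.exists_isMinOn ⟨x 0, by simp⟩ hf.continuous.continuousOn
  have hbdd : ∀ k, f z ≤ a k := by
    intro k
    have hmem : x k ∈ {y | f y ≤ f (x 0)} := hanti (Nat.zero_le k)
    exact hzmin hmem
  -- a converges
  have hbelow : BddBelow (Set.range a) := ⟨f z, by rintro _ ⟨k, rfl⟩; exact hbdd k⟩
  have hconv : Filter.Tendsto a Filter.atTop (nhds (⨅ k, a k)) :=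
    tendsto_atTop_ciInf hanti hbelow
  have hconv' : Filter.Tendsto (fun k => a (k + 1)) Filter.atTop (nhds (⨅ k, a k)) :=
    hconv.comp (Filter.tendsto_add_atTop_nat 1)
  have hdiff0 : Filter.Tendsto (fun k => a k - a (k + 1)) Filter.atTop (nhds 0) := by
    simpa using hconv.sub hconv'
  -- squeeze
  have hsq : Filter.Tendsto (fun k => ‖g k‖ ^ 2) Filter.atTop (nhds 0) := by
    have hC : (0:ℝ) < ρ ^ 2 / M := div_pos (pow_pos hρ 2) hM
    have hub : ∀ k, ‖g k‖ ^ 2 ≤ M / ρ ^ 2 * (a k - a (k + 1)) := by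
      intro k
      have h0 := hdec k
      rw [div_mul_eq_mul_div, div_le_iff₀ hM] at h0
      have h2 : M / ρ ^ 2 * (a k - a (k + 1)) = M * (a k - a (k + 1)) / ρ ^ 2 := by ring
      rw [h2, le_div_iff₀ (pow_pos hρ 2)]
      nlinarith
    have htend : Filter.Tendsto (fun k => M / ρ ^ 2 * (a k - a (k + 1)))
        Filter.atTop (nhds 0) := by
      simpa using hdiff0.const_mul (M / ρ ^ 2)
    exact squeeze_zero (fun k => by positivity) hub htend
  have := (Real.continuous_sqrt.tendsto 0).comp hsq
  simp only [Function.comp_def, Real.sqrt_eq_zero', Real.sqrt_sq (norm_nonneg _)] at this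
  simpa [Real.sqrt_zero] using this
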